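/- Let λ₁,...,λₙ > 0, not all equal, and let λ = (λ₁λ₂⋯λₙ)^{1/n}. Then for every u ∈ (0,1), 1 - ∏_{i=1}^n [(1-u)/(1-(1-λᵢ)u)] ≥ 1 - [(1-u)/(1-(1-λ)u)]^n, i.e., ∏_{i=1}^n [1/(1-(1-λᵢ)u)] ≥ [1/(1-(1-λ)u)]^n. (Hence X_{n:n} ≥_{st} Y_{n:n}: the parallel system with heterogeneous PO components is stochastically larger than the homogeneous one with parameter the geometric mean.) -/

import Mathlib

open Finset

theorem parallel_po_st_geometric_mean {n : ℕ} (lam : Fin n → ℝ)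
    (hlam : ∀ i, 0 < lam i) (hne : ∃ i j : Fin n, lam i ≠ lam j) :
    ∀ u : ℝ, u ∈ Set.Ioo (0:ℝ) 1 →
      1 - ∏ i, (1 - u) / (1 - (1 - lam i) * u) ≥
        1 - ((1 - u) / (1 - (1 - (∏ i, lam i) ^ ((1:ℝ) / n)) * u)) ^ n := by
  obtain ⟨i0, -, -⟩ := hne
  have hn : 0 < n := i0.pos
  have hN : (0:ℝ) < n := Nat.cast_pos.mpr hn
  intro u hu
  obtain ⟨hu0, hu1⟩ := hu
  have ha : (0:ℝ) < 1 - u := by linarith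
  have hd : ∀ i, 0 < 1 - (1 - lam i) * u := by
    intro i
    have := hlam i
    nlinarith
  have hprod : (0:ℝ) < ∏ i, lam i := Finset.prod_pos fun i _ => hlam i
  set L : ℝ := (∏ i, lam i) ^ ((1:ℝ) / n) with hL
  have hLpos : 0 < L := Real.rpow_pos_of_pos hprod _
  have hdL : (0:ℝ) < 1 - (1 - L) * u := by nlinarith
  set P : ℝ := ∏ i, (1 - (1 - lam i) * u) with hP
  have hPpos : 0 < P := Finset.prod_pos fun i _ => hd i
  set Q : ℝ := P ^ ((1:ℝ) / n) with hQ
  have hQpos : 0 < Q := Real.rpow_pos_of_pos hPpos _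
  -- key: geometric mean superadditivity
  have h1 : ∏ i, ((1 - u) / (1 - (1 - lam i) * u)) ^ ((1:ℝ)/n) ≤
      ∑ i, ((1:ℝ)/n) * ((1 - u) / (1 - (1 - lam i) * u)) :=
    Real.geom_mean_le_arith_mean_weighted univ (fun _ => (1:ℝ)/n) _
      (fun i _ => by positivity) (by simp [Finset.card_fin]; field_simp)
      (fun i _ => (div_pos ha (hd i)).le)
  have h2 : ∏ i, ((lam i * u) / (1 - (1 - lam i) * u)) ^ ((1:ℝ)/n) ≤
      ∑ i, ((1:ℝ)/n) * ((lam i * u) / (1 - (1 - lam i) * u)) :=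
    Real.geom_mean_le_arith_mean_weighted univ (fun _ => (1:ℝ)/n) _
      (fun i _ => by positivity) (by simp [Finset.card_fin]; field_simp)
      (fun i _ => (div_pos (mul_pos (hlam i) hu0) (hd i)).le)
  have hsum : (∑ i, ((1:ℝ)/n) * ((1 - u) / (1 - (1 - lam i) * u))) +
      (∑ i, ((1:ℝ)/n) * ((lam i * u) / (1 - (1 - lam i) * u))) = 1 := by
    rw [← Finset.sum_add_distrib]
    have : ∀ i : Fin n, ((1:ℝ)/n) * ((1 - u) / (1 - (1 - lam i) * u)) +
        ((1:ℝ)/n) * ((lam i * u) / (1 - (1 - lam i) * u)) = (1:ℝ)/n := by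
      intro i
      have h := (hd i).ne'
      field_simp
      rw [div_eq_one_iff_eq (by convert h using 1; ring)]
      ring
    rw [Finset.sum_congr rfl fun i _ => this i]
    simp [Finset.card_fin]
    field_simp
  have hcancel : ((1:ℝ)/n) * n = 1 := by field_simp
  have hcancel' : (n:ℝ) * ((1:ℝ)/n) = 1 := by field_simp
  have e1 : ∏ i, ((1 - u) / (1 - (1 - lam i) * u)) ^ ((1:ℝ)/n) = (1 - u) / Q := by
    rw [Real.finset_prod_rpow _ _ (fun i _ => (div_pos ha (hd i)).le)]
    rw [Finset.prod_div_distrib, Finset.prod_const, Finset.card_fin]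
    rw [Real.div_rpow (by positivity) hPpos.le]
    congr 1
    rw [← Real.rpow_natCast (1-u) n, ← Real.rpow_mul ha.le, hcancel', Real.rpow_one]
  have e2 : ∏ i, ((lam i * u) / (1 - (1 - lam i) * u)) ^ ((1:ℝ)/n) = L * u / Q := by
    rw [Real.finset_prod_rpow _ _ (fun i _ => (div_pos (mul_pos (hlam i) hu0) (hd i)).le)]
    rw [Finset.prod_div_distrib, Finset.prod_mul_distrib, Finset.prod_const, Finset.card_fin]
    rw [Real.div_rpow (mul_nonneg hprod.le (by positivity)) hPpos.le]
    rw [Real.mul_rpow hprod.le (by positivity)]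
    congr 2
    rw [← Real.rpow_natCast u n, ← Real.rpow_mul hu0.le, hcancel', Real.rpow_one]
  have hkey : 1 - (1 - L) * u ≤ Q := by
    have h3 : (1 - u) / Q + L * u / Q ≤ 1 := by
      rw [← e1, ← e2]; linarith [h1, h2, hsum.le]
    have : ((1 - u) + L * u) / Q ≤ 1 := by rw [add_div]; exact h3
    have h4 := (div_le_one hQpos).mp this
    nlinarith
  have hQn : Q ^ n = P := by
    rw [hQ, ← Real.rpow_natCast (P ^ ((1:ℝ)/n)) n, ← Real.rpow_mul hPpos.le, hcancel,
      Real.rpow_one]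
  have hdn : (1 - (1 - L) * u) ^ n ≤ P := by
    calc (1 - (1 - L) * u) ^ n ≤ Q ^ n := pow_le_pow_left₀ hdL.le hkey n
    _ = P := hQn
  have hmain : ∏ i, (1 - u) / (1 - (1 - lam i) * u) ≤
      ((1 - u) / (1 - (1 - L) * u)) ^ n := by
    rw [Finset.prod_div_distrib, Finset.prod_const, Finset.card_fin, div_pow]
    apply div_le_div_of_nonneg_left (by positivity) (by positivity) hdn
  linarith [hmain]
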